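/- Fix integers n ≥ K ≥ 3 and β > 0, and define the engagement-based reward mechanism as follows: for a score vector σ ∈ [0,1]ⁿ, a creator i whose score σᵢ ranks among the K largest (ties broken by a fixed order) receives M(σᵢ; σ₋ᵢ) = (exp(σᵢ/β)/S) · β log S, where S = Σ over the K largest scores σⱼ of exp(σⱼ/β), and all other creators receive 0. Then: (i) the total reward equals β log S and is nondecreasing in each σⱼ (monotonicity); (ii) negative externality holds: if the scores of the creators other than i are componentwise weakly increased while σᵢ is unchanged, creator i's reward weakly decreases (this uses that S ≥ K ≥ 3 > e and that t ↦ (log t)/t is decreasing for t > e). -/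

import Mathlib

/-- The (0-indexed) rank of creator `i` in the score vector `σ`, ties broken by a fixed
order (the index order). Creator `i` is "in the top `K`" iff `rankCount σ i < K`. -/
noncomputable def rankCount {n : ℕ} (σ : Fin n → ℝ) (i : Fin n) : ℕ :=
  (Finset.univ.filter fun j => σ i < σ j ∨ (σ i = σ j ∧ j < i)).card

/-- `S = ∑_{j in the top K} exp(σ_j / β)`. -/
noncomputable def topS {n : ℕ} (K : ℕ) (β : ℝ) (σ : Fin n → ℝ) : ℝ :=
  ∑ j : Fin n, if rankCount σ j < K then Real.exp (σ j / β) else 0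

/-- The engagement-based reward: a creator in the top `K` receives
`(exp(σᵢ/β)/S) · β log S`, all other creators receive `0`. -/
noncomputable def engageReward {n : ℕ} (K : ℕ) (β : ℝ) (σ : Fin n → ℝ) (i : Fin n) : ℝ :=
  if rankCount σ i < K then
    Real.exp (σ i / β) / topS K β σ * (β * Real.log (topS K β σ))
  else 0

namespace Stmt16Aux

variable {n K : ℕ} {β : ℝ} {σ σ' : Fin n → ℝ}

lemma rank_lt_of_beats {a b : Fin n}
    (h : σ b < σ a ∨ (σ b = σ a ∧ a < b)) : rankCount σ a < rankCount σ b := by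
  classical
  have ha : a ∉ Finset.univ.filter fun m => σ a < σ m ∨ (σ a = σ m ∧ m < a) := by
    simp
  have hsub : insert a (Finset.univ.filter fun m => σ a < σ m ∨ (σ a = σ m ∧ m < a))
      ⊆ Finset.univ.filter fun m => σ b < σ m ∨ (σ b = σ m ∧ m < b) := by
    intro m hm
    simp only [Finset.mem_insert, Finset.mem_filter, Finset.mem_univ, true_and] at hm ⊢
    rcases hm with rfl | hm
    · exact h
    · rcases h with h1 | ⟨h1, h2⟩
      · rcases hm with hm1 | ⟨hm1, hm2⟩
        · exact Or.inl (by linarith)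
        · exact Or.inl (by linarith)
      · rcases hm with hm1 | ⟨hm1, hm2⟩
        · exact Or.inl (by linarith)
        · exact Or.inr ⟨by linarith, hm2.trans h2⟩
  have := Finset.card_le_card hsub
  rw [Finset.card_insert_of_notMem ha] at this
  unfold rankCount
  omega

lemma rank_injective (σ : Fin n → ℝ) : Function.Injective (rankCount σ) := by
  intro a b h
  by_contra hne
  have htot : (σ b < σ a ∨ (σ b = σ a ∧ a < b)) ∨ (σ a < σ b ∨ (σ a = σ b ∧ b < a)) := by
    rcases lt_trichotomy (σ a) (σ b) with h1 | h1 | h1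
    · exact Or.inr (Or.inl h1)
    · rcases lt_or_gt_of_ne hne with h2 | h2
      · exact Or.inl (Or.inr ⟨h1.symm, h2⟩)
      · exact Or.inr (Or.inr ⟨h1, h2⟩)
    · exact Or.inl (Or.inl h1)
  rcases htot with ht | ht
  · exact absurd h (Nat.ne_of_lt (rank_lt_of_beats ht))
  · exact absurd h.symm (Nat.ne_of_lt (rank_lt_of_beats ht))

lemma rank_lt_n (σ : Fin n → ℝ) (i : Fin n) : rankCount σ i < n := by
  classical
  have hi : i ∉ Finset.univ.filter fun m => σ i < σ m ∨ (σ i = σ m ∧ m < i) := by simp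
  have := Finset.card_lt_card
    ((Finset.ssubset_iff_of_subset (Finset.subset_univ _)).2 ⟨i, Finset.mem_univ i, hi⟩)
  simpa [rankCount] using this

lemma image_rank (σ : Fin n → ℝ) :
    Finset.univ.image (rankCount σ) = Finset.range n := by
  apply Finset.eq_of_subset_of_card_le
  · intro k hk
    simp only [Finset.mem_image, Finset.mem_univ, true_and] at hk
    obtain ⟨i, rfl⟩ := hk
    exact Finset.mem_range.2 (rank_lt_n σ i)
  · rw [Finset.card_range, Finset.card_image_of_injective _ (rank_injective σ),
      Finset.card_univ, Fintype.card_fin]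

lemma card_top (hKn : K ≤ n) (σ : Fin n → ℝ) :
    (Finset.univ.filter fun i => rankCount σ i < K).card = K := by
  classical
  have himg : (Finset.univ.filter fun i => rankCount σ i < K).image (rankCount σ)
      = Finset.range K := by
    ext k
    simp only [Finset.mem_image, Finset.mem_filter, Finset.mem_univ, true_and,
      Finset.mem_range]
    constructor
    · rintro ⟨i, hi, rfl⟩; exact hi
    · intro hk
      have : k ∈ Finset.univ.image (rankCount σ) := by
        rw [image_rank]; exact Finset.mem_range.2 (lt_of_lt_of_le hk hKn)
      simp only [Finset.mem_image, Finset.mem_univ, true_and] at this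
      obtain ⟨i, rfl⟩ := this
      exact ⟨i, hk, rfl⟩
  have := congrArg Finset.card himg
  rwa [Finset.card_image_of_injective _ (rank_injective σ), Finset.card_range] at this

lemma topS_eq (K : ℕ) (β : ℝ) (σ : Fin n → ℝ) :
    topS K β σ = ∑ j ∈ Finset.univ.filter (fun j => rankCount σ j < K),
      Real.exp (σ j / β) := by
  rw [Finset.sum_filter]; rfl

lemma K_le_topS (hKn : K ≤ n) (hβ : 0 < β) (hσ : ∀ j, 0 ≤ σ j) :
    (K : ℝ) ≤ topS K β σ := by
  rw [topS_eq]
  have := Finset.card_nsmul_le_sum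
    (Finset.univ.filter fun j => rankCount σ j < K)
    (fun j => Real.exp (σ j / β)) 1
    (fun x _ => Real.one_le_exp (div_nonneg (hσ x) hβ.le))
  rwa [card_top hKn, nsmul_eq_mul, mul_one] at this

lemma sum_le_topS (hKn : K ≤ n) (hβ : 0 < β) {A : Finset (Fin n)} (hA : A.card = K) :
    ∑ j ∈ A, Real.exp (σ j / β) ≤ topS K β σ := by
  classical
  set T := Finset.univ.filter fun j => rankCount σ j < K with hTdef
  have hT : T.card = K := card_top hKn σ
  have key : ∀ j ∈ A \ T, ∀ l ∈ T \ A, σ j ≤ σ l := by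
    intro j hj l hl
    by_contra hc
    push_neg at hc
    have hb : rankCount σ j < rankCount σ l := rank_lt_of_beats (Or.inl hc)
    have hlT : rankCount σ l < K := by
      have := (Finset.mem_sdiff.1 hl).1
      simpa [hTdef] using this
    have hjT : ¬ rankCount σ j < K := by
      have := (Finset.mem_sdiff.1 hj).2
      simpa [hTdef] using this
    omega
  have hcard : (A \ T).card = (T \ A).card := by
    have h1 := Finset.card_sdiff_add_card_inter A T
    have h2 := Finset.card_sdiff_add_card_inter T A
    rw [Finset.inter_comm] at h2
    omega
  rw [topS_eq, ← hTdef]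
  rw [← Finset.sum_inter_add_sum_sdiff A T (fun j => Real.exp (σ j / β)),
    ← Finset.sum_inter_add_sum_sdiff T A (fun j => Real.exp (σ j / β)),
    Finset.inter_comm T A]
  refine add_le_add le_rfl ?_
  rcases Finset.eq_empty_or_nonempty (T \ A) with he | hne
  · have : (A \ T) = ∅ := Finset.card_eq_zero.1 (by rw [hcard, he]; simp)
    rw [this, he]
  · set b := (T \ A).inf' hne (fun l => Real.exp (σ l / β)) with hb
    calc ∑ j ∈ A \ T, Real.exp (σ j / β)
        ≤ (A \ T).card • b := Finset.sum_le_card_nsmul _ _ _ (by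
          intro x hx
          exact Finset.le_inf' hne _ (fun l hl =>
            Real.exp_le_exp.2 (div_le_div_of_nonneg_right (key x hx l hl) hβ.le)))
      _ = (T \ A).card • b := by rw [hcard]
      _ ≤ ∑ l ∈ T \ A, Real.exp (σ l / β) :=
          Finset.card_nsmul_le_sum _ _ _ (fun l hl => Finset.inf'_le _ hl)

lemma topS_mono (hKn : K ≤ n) (hβ : 0 < β) (h : ∀ j, σ j ≤ σ' j) :
    topS K β σ ≤ topS K β σ' := by
  rw [topS_eq]
  calc ∑ j ∈ Finset.univ.filter (fun j => rankCount σ j < K), Real.exp (σ j / β)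
      ≤ ∑ j ∈ Finset.univ.filter (fun j => rankCount σ j < K), Real.exp (σ' j / β) :=
        Finset.sum_le_sum (fun j _ =>
          Real.exp_le_exp.2 (div_le_div_of_nonneg_right (h j) hβ.le))
    _ ≤ topS K β σ' := sum_le_topS hKn hβ (card_top hKn σ)

lemma rank_le_rank (i : Fin n) (hii : σ' i = σ i) (h : ∀ j, j ≠ i → σ j ≤ σ' j) :
    rankCount σ i ≤ rankCount σ' i := by
  classical
  apply Finset.card_le_card
  intro j hj
  simp only [Finset.mem_filter, Finset.mem_univ, true_and] at hj ⊢
  have hji : j ≠ i := by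
    rintro rfl
    rcases hj with h1 | ⟨_, h2⟩
    · exact lt_irrefl _ h1
    · exact lt_irrefl _ h2
  have hj' : σ j ≤ σ' j := h j hji
  rcases hj with h1 | ⟨h1, h2⟩
  · exact Or.inl (by rw [hii]; linarith)
  · rcases lt_or_eq_of_le (le_trans (le_of_eq h1) hj') with h3 | h3
    · exact Or.inl (by rw [hii]; linarith)
    · exact Or.inr ⟨by rw [hii]; linarith, h2⟩

end Stmt16Aux

namespace Stmt16Aux

lemma total_eq {n K : ℕ} {β : ℝ} {σ : Fin n → ℝ}
    (hK : 3 ≤ K) (hKn : K ≤ n) (hβ : 0 < β) (hσ : ∀ j, 0 ≤ σ j) :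
    ∑ i, engageReward K β σ i = β * Real.log (topS K β σ) := by
  have h3K : (3:ℝ) ≤ (K:ℝ) := by exact_mod_cast hK
  have hS : (K:ℝ) ≤ topS K β σ := K_le_topS hKn hβ hσ
  have hS0 : topS K β σ ≠ 0 := by intro h; rw [h] at hS; linarith
  have hterm : ∀ i, engageReward K β σ i =
      (if rankCount σ i < K then Real.exp (σ i / β) else 0) *
        (β * Real.log (topS K β σ) / topS K β σ) := by
    intro i; unfold engageReward; split
    · ring
    · simp
  rw [Finset.sum_congr rfl (fun i _ => hterm i), ← Finset.sum_mul]
  have hsum : ∑ i, (if rankCount σ i < K then Real.exp (σ i / β) else 0)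
      = topS K β σ := rfl
  rw [hsum]
  field_simp

end Stmt16Aux

/-- For `n ≥ K ≥ 3` and `β > 0`, the engagement-based mechanism on
score vectors in `[0,1]ⁿ` satisfies:
(i) the total reward equals `β log S` and is nondecreasing in each score (monotonicity);
(ii) negative externality: if the others' scores are componentwise weakly increased
while `σᵢ` is unchanged, creator `i`'s reward weakly decreases. -/
theorem stmt16 {n K : ℕ} (hK : 3 ≤ K) (hKn : K ≤ n) (β : ℝ) (hβ : 0 < β) :
    (∀ σ : Fin n → ℝ, (∀ j, σ j ∈ Set.Icc (0:ℝ) 1) →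
        (∑ i, engageReward K β σ i) = β * Real.log (topS K β σ)) ∧
    (∀ σ σ' : Fin n → ℝ, (∀ j, σ j ∈ Set.Icc (0:ℝ) 1) → (∀ j, σ' j ∈ Set.Icc (0:ℝ) 1) →
        (∀ j, σ j ≤ σ' j) →
        (∑ i, engageReward K β σ i) ≤ ∑ i, engageReward K β σ' i) ∧
    (∀ σ σ' : Fin n → ℝ, (∀ j, σ j ∈ Set.Icc (0:ℝ) 1) → (∀ j, σ' j ∈ Set.Icc (0:ℝ) 1) →
        ∀ i : Fin n, σ' i = σ i → (∀ j, j ≠ i → σ j ≤ σ' j) →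
        engageReward K β σ' i ≤ engageReward K β σ i) := by
  have h3K : (3:ℝ) ≤ (K:ℝ) := by exact_mod_cast hK
  refine ⟨fun σ hσ => Stmt16Aux.total_eq hK hKn hβ (fun j => (hσ j).1), ?_, ?_⟩
  · intro σ σ' hσ hσ' hle
    rw [Stmt16Aux.total_eq hK hKn hβ (fun j => (hσ j).1),
      Stmt16Aux.total_eq hK hKn hβ (fun j => (hσ' j).1)]
    have hS : (K:ℝ) ≤ topS K β σ := Stmt16Aux.K_le_topS hKn hβ (fun j => (hσ j).1)
    exact mul_le_mul_of_nonneg_left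
      (Real.log_le_log (by linarith) (Stmt16Aux.topS_mono hKn hβ hle)) hβ.le
  · intro σ σ' hσ hσ' i hii hoth
    have he3 : Real.exp 1 ≤ (3:ℝ) := by
      have := Real.exp_one_lt_d9; norm_num at this ⊢; linarith
    have hall : ∀ j, σ j ≤ σ' j := by
      intro j
      by_cases hj : j = i
      · subst hj; rw [hii]
      · exact hoth j hj
    have hSS' : topS K β σ ≤ topS K β σ' := Stmt16Aux.topS_mono hKn hβ hall
    have hrank : rankCount σ i ≤ rankCount σ' i := Stmt16Aux.rank_le_rank i hii hoth
    have hS : (K:ℝ) ≤ topS K β σ := Stmt16Aux.K_le_topS hKn hβ (fun j => (hσ j).1)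
    have hS' : (K:ℝ) ≤ topS K β σ' := Stmt16Aux.K_le_topS hKn hβ (fun j => (hσ' j).1)
    unfold engageReward
    split_ifs with h1 h2
    · rw [hii]
      have hanti := Real.log_div_self_antitoneOn
        (show Real.exp 1 ≤ topS K β σ by linarith)
        (show Real.exp 1 ≤ topS K β σ' by linarith) hSS'
      have e1 : Real.exp (σ i / β) / topS K β σ' * (β * Real.log (topS K β σ'))
          = (Real.exp (σ i / β) * β) * (Real.log (topS K β σ') / topS K β σ') := by ring
      have e2 : Real.exp (σ i / β) / topS K β σ * (β * Real.log (topS K β σ))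
          = (Real.exp (σ i / β) * β) * (Real.log (topS K β σ) / topS K β σ) := by ring
      rw [e1, e2]
      exact mul_le_mul_of_nonneg_left hanti (by positivity)
    · omega
    · exact mul_nonneg (div_nonneg (Real.exp_nonneg _) (by linarith))
        (mul_nonneg hβ.le (Real.log_nonneg (by linarith)))
    · exact le_refl 0
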